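/- Under the hypotheses of the even-N identifiability lemma (S invertible, S e_1 = e_1, e_2^T S = e_2^T, S A(h) = A(h')S with A(h) tridiagonal antisymmetric with nonzero superdiagonal entries), the first column and first row of the products force h_1 = h'_1 and the first row of S to equal e_1^T. -/
import Mathlib


open Matrix

/-- The n×n tridiagonal antisymmetric matrix with superdiagonal entries
`h 0, h 1, ..., h (n-2)`. -/
def triA (n : ℕ) (h : ℕ → ℝ) : Matrix (Fin n) (Fin n) ℝ :=
  Matrix.of fun i j =>
    if (i : ℕ) + 1 = (j : ℕ) then h i
    else if (j : ℕ) + 1 = (i : ℕ) then -(h j) else 0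

lemma triA_apply {n : ℕ} (h : ℕ → ℝ) (i j : Fin n) :
    triA n h i j =
      if (i : ℕ) + 1 = (j : ℕ) then h i
      else if (j : ℕ) + 1 = (i : ℕ) then -(h j) else 0 := rfl

lemma sum_ite_coe {n : ℕ} (m : ℕ) (f : Fin n → ℝ) :
    ∑ k : Fin n, (if (k : ℕ) = m then f k else 0)
      = if hm : m < n then f ⟨m, hm⟩ else 0 := by
  split
  · next hm =>
    rw [Finset.sum_eq_single (⟨m, hm⟩ : Fin n)]
    · simp
    · intro k _ hk
      rw [if_neg]
      simpa [Fin.ext_iff] using hk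
    · simp
  · next hm =>
    refine Finset.sum_eq_zero fun k _ => ?_
    rw [if_neg]
    have := k.isLt
    omega

theorem stmt_6 (n : ℕ) (hn : 2 ≤ n) (h h' : ℕ → ℝ)
    (hh : ∀ i, i < n - 1 → h i ≠ 0) (hh' : ∀ i, i < n - 1 → h' i ≠ 0)
    (S : Matrix (Fin n) (Fin n) ℝ) (hS : IsUnit S)
    (hB : S.mulVec (Pi.single ⟨0, by omega⟩ 1) = Pi.single ⟨0, by omega⟩ 1)
    (hC : Matrix.vecMul (Pi.single ⟨1, by omega⟩ 1) S = Pi.single ⟨1, by omega⟩ 1)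
    (hAS : S * triA n h = triA n h' * S) :
    h 0 = h' 0
    ∧ ∀ j : Fin n, S ⟨0, by omega⟩ j = if j = ⟨0, by omega⟩ then 1 else 0 := by
  have h0n : (0 : ℕ) < n := by omega
  have h1n : (1 : ℕ) < n := by omega
  -- column fact : S i 0 = δ_{i0}
  have colfact : ∀ i : Fin n, S i ⟨0, h0n⟩ = if i = ⟨0, h0n⟩ then 1 else 0 := by
    intro i
    have e := congrFun hB i
    simp only [Matrix.mulVec, dotProduct, Pi.single_apply, mul_ite, mul_one, mul_zero,
      Finset.sum_ite_eq', Finset.mem_univ, if_true] at e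
    exact e
  -- row fact : S 1 j = δ_{1j}
  have rowfact : ∀ j : Fin n, S ⟨1, h1n⟩ j = if j = ⟨1, h1n⟩ then 1 else 0 := by
    intro j
    have e := congrFun hC j
    simp only [Matrix.vecMul, dotProduct, Pi.single_apply, ite_mul, one_mul, zero_mul] at e
    rw [Finset.sum_ite_eq' Finset.univ (⟨1, h1n⟩ : Fin n) (fun x => S x j),
      if_pos (Finset.mem_univ _)] at e
    exact e
  -- the row-0 vector of S as a function on ℕ
  set s : ℕ → ℝ := fun k => if hk : k < n then S ⟨0, h0n⟩ ⟨k, hk⟩ else 0 with hs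
  have sdef : ∀ (k : ℕ) (hk : k < n), s k = S ⟨0, h0n⟩ ⟨k, hk⟩ := by
    intro k hk
    simp only [hs]
    rw [dif_pos hk]
  have sdef0 : ∀ k : ℕ, ¬k < n → s k = 0 := by
    intro k hk
    simp only [hs]
    rw [dif_neg hk]
  have s0 : s 0 = 1 := by
    rw [sdef 0 h0n, colfact]
    simp
  have hEq : ∀ i j : Fin n, (S * triA n h) i j = (triA n h' * S) i j := by
    intro i j; rw [hAS]
  -- h 0 = h' 0 from entry (1,0)
  have h00 : h 0 = h' 0 := by
    have e := hEq ⟨1, h1n⟩ ⟨0, h0n⟩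
    rw [Matrix.mul_apply, Matrix.mul_apply] at e
    have eL : ∑ k : Fin n, S ⟨1, h1n⟩ k * triA n h k ⟨0, h0n⟩ = -(h 0) := by
      have pw : ∀ k : Fin n, S ⟨1, h1n⟩ k * triA n h k ⟨0, h0n⟩
          = (if (k : ℕ) = 1 then -(h 0) else 0) := by
        intro k
        rw [rowfact, triA_apply]
        simp only [Fin.val_mk]
        by_cases hk : (k : ℕ) = 1
        · rw [if_pos (show k = ⟨1, h1n⟩ from Fin.ext (by simp [Fin.val_mk, hk])),
            if_neg (show ¬((k : ℕ) + 1 = 0) by omega),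
            if_pos (show 0 + 1 = (k : ℕ) by omega), if_pos hk]
          ring
        · rw [if_neg (show k ≠ ⟨1, h1n⟩ from fun hc => hk (by rw [hc])), if_neg hk, zero_mul]
      rw [Finset.sum_congr rfl fun k _ => pw k, sum_ite_coe, dif_pos h1n]
    have eR : ∑ k : Fin n, triA n h' ⟨1, h1n⟩ k * S k ⟨0, h0n⟩ = -(h' 0) := by
      have pw : ∀ k : Fin n, triA n h' ⟨1, h1n⟩ k * S k ⟨0, h0n⟩
          = (if (k : ℕ) = 0 then -(h' 0) else 0) := by
        intro k
        rw [colfact, triA_apply]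
        simp only [Fin.val_mk]
        by_cases hk : (k : ℕ) = 0
        · rw [if_neg (show ¬(1 + 1 = (k : ℕ)) by omega),
            if_pos (show (k : ℕ) + 1 = 1 by omega),
            if_pos (show k = ⟨0, h0n⟩ from Fin.ext (by simp [Fin.val_mk, hk])), hk]
          simp
        · rw [if_neg (show k ≠ ⟨0, h0n⟩ from fun hc => hk (by rw [hc])), mul_zero, if_neg hk]
      rw [Finset.sum_congr rfl fun k _ => pw k, sum_ite_coe, dif_pos h0n]
    rw [eL, eR] at e
    linarith
  -- the key recurrence from row 0 of S A = A' S
  have key : ∀ (j : ℕ) (hj : j < n),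
      (if j = 0 then 0 else s (j - 1) * h (j - 1)) - s (j + 1) * h j
        = (if j = 1 then h' 0 else 0) := by
    intro j hj
    have e := hEq ⟨0, h0n⟩ ⟨j, hj⟩
    rw [Matrix.mul_apply, Matrix.mul_apply] at e
    -- RHS : ∑ k, triA n h' 0 k * S k j = h' 0 * S 1 j
    have eR : ∑ k : Fin n, triA n h' ⟨0, h0n⟩ k * S k ⟨j, hj⟩
        = (if j = 1 then h' 0 else 0) := by
      have pw : ∀ k : Fin n, triA n h' ⟨0, h0n⟩ k * S k ⟨j, hj⟩
          = (if (k : ℕ) = 1 then h' 0 * S k ⟨j, hj⟩ else 0) := by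
        intro k
        rw [triA_apply]
        simp only [Fin.val_mk]
        by_cases hk : (k : ℕ) = 1
        · rw [if_pos (show 0 + 1 = (k : ℕ) by omega), if_pos hk]
        · rw [if_neg (show ¬(0 + 1 = (k : ℕ)) by omega),
            if_neg (show ¬((k : ℕ) + 1 = 0) by omega), if_neg hk, zero_mul]
      rw [Finset.sum_congr rfl fun k _ => pw k, sum_ite_coe, dif_pos h1n, rowfact]
      by_cases hj1 : j = 1
      · rw [if_pos (show (⟨j, hj⟩ : Fin n) = ⟨1, h1n⟩ from Fin.ext (by simp [Fin.val_mk, hj1])),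
          if_pos hj1, mul_one]
      · rw [if_neg (show (⟨j, hj⟩ : Fin n) ≠ ⟨1, h1n⟩ from
            fun hc => hj1 (by simpa using congrArg Fin.val hc)), if_neg hj1, mul_zero]
    -- LHS split into the two diagonals
    have eL : ∑ k : Fin n, S ⟨0, h0n⟩ k * triA n h k ⟨j, hj⟩
        = (if j = 0 then 0 else s (j - 1) * h (j - 1)) - s (j + 1) * h j := by
      have split : ∀ k : Fin n, S ⟨0, h0n⟩ k * triA n h k ⟨j, hj⟩
          = (if (k : ℕ) = j - 1 ∧ j ≠ 0 then S ⟨0, h0n⟩ k * h (j - 1) else 0)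
            + (if (k : ℕ) = j + 1 then S ⟨0, h0n⟩ k * (-(h j)) else 0) := by
        intro k
        rw [triA_apply]
        simp only [Fin.val_mk]
        by_cases hc1 : (k : ℕ) + 1 = j
        · rw [if_pos hc1, if_pos (show (k : ℕ) = j - 1 ∧ j ≠ 0 by omega),
            if_neg (show ¬((k : ℕ) = j + 1) by omega)]
          have hkv : (k : ℕ) = j - 1 := by omega
          rw [hkv]
          ring
        · by_cases hc2 : (k : ℕ) = j + 1
          · rw [if_neg hc1, if_pos (show j + 1 = (k : ℕ) by omega),
              if_neg (show ¬((k : ℕ) = j - 1 ∧ j ≠ 0) by omega), if_pos hc2]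
            ring
          · rw [if_neg hc1, if_neg (show ¬(j + 1 = (k : ℕ)) by omega),
              if_neg (show ¬((k : ℕ) = j - 1 ∧ j ≠ 0) by omega), if_neg hc2]
            ring
      rw [Finset.sum_congr rfl fun k _ => split k, Finset.sum_add_distrib]
      have e1 : ∑ k : Fin n, (if (k : ℕ) = j - 1 ∧ j ≠ 0 then S ⟨0, h0n⟩ k * h (j - 1) else 0)
          = (if j = 0 then 0 else s (j - 1) * h (j - 1)) := by
        by_cases hj0 : j = 0
        · subst hj0; simp
        · have pw : ∀ k : Fin n,
              (if (k : ℕ) = j - 1 ∧ j ≠ 0 then S ⟨0, h0n⟩ k * h (j - 1) else 0)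
              = (if (k : ℕ) = j - 1 then S ⟨0, h0n⟩ k * h (j - 1) else 0) := by
            intro k; simp [hj0]
          have hj1 : j - 1 < n := by omega
          rw [Finset.sum_congr rfl fun k _ => pw k, sum_ite_coe, if_neg hj0,
            dif_pos hj1, sdef (j - 1) hj1]
      have e2 : ∑ k : Fin n, (if (k : ℕ) = j + 1 then S ⟨0, h0n⟩ k * (-(h j)) else 0)
          = -(s (j + 1) * h j) := by
        rw [sum_ite_coe]
        by_cases hj1 : j + 1 < n
        · rw [dif_pos hj1, sdef (j + 1) hj1]
          ring
        · rw [dif_neg hj1, sdef0 (j + 1) hj1]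
          ring
      rw [e1, e2]; ring
    rw [eL, eR] at e
    exact e
  -- strong induction: s k = δ_{k0}
  have sfact : ∀ k : ℕ, s k = if k = 0 then 1 else 0 := by
    intro k
    induction k using Nat.strong_induction_on with
    | _ k ih =>
      match k, ih with
      | 0, _ => simpa using s0
      | 1, _ =>
        have hne : h 0 ≠ 0 := hh 0 (by omega)
        have e := key 0 h0n
        rw [if_pos rfl, if_neg (by omega : (0 : ℕ) ≠ 1)] at e
        have e' : s 1 * h 0 = 0 := by linarith
        simp only [if_neg one_ne_zero]
        exact (mul_eq_zero.mp e').resolve_right hne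
      | (m + 2), ih =>
        simp only [if_neg (by omega : m + 2 ≠ 0)]
        by_cases hkn : m + 2 < n
        · have hm1 : m + 1 < n := by omega
          have e := key (m + 1) hm1
          have hne : h (m + 1) ≠ 0 := hh (m + 1) (by omega)
          by_cases hm0 : m = 0
          · subst hm0
            rw [if_neg (by omega : (1 : ℕ) ≠ 0), if_pos rfl] at e
            rw [show (1 : ℕ) - 1 = 0 from rfl, s0, one_mul] at e
            have e' : s 2 * h 1 = 0 := by rw [← h00] at e; linarith
            exact (mul_eq_zero.mp e').resolve_right (hh 1 (by omega))
          · have em : s m = 0 := by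
              have := ih m (by omega)
              rwa [if_neg hm0] at this
            rw [if_neg (by omega : m + 1 ≠ 0), if_neg (by omega : m + 1 ≠ 1)] at e
            rw [show m + 1 - 1 = m from rfl, em, zero_mul, zero_sub, neg_eq_zero] at e
            exact (mul_eq_zero.mp e).resolve_right hne
        · exact sdef0 (m + 2) hkn
  refine ⟨h00, fun j => ?_⟩
  have hjn : (j : ℕ) < n := j.isLt
  have hSj : S ⟨0, h0n⟩ j = s (j : ℕ) := by
    rw [sdef (j : ℕ) hjn]
  rw [hSj, sfact]
  simp [Fin.ext_iff]
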